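/- Let R be a commutative ring and r ∈ R. If C is an R-module that is r-separated and r-complete (the natural map C → lim_n C/r^nC is an isomorphism), then C is an r-contramodule: Hom_R(R[r^{-1}], C) = 0 and Ext^1_R(R[r^{-1}], C) = 0. -/

import Mathlib

open CategoryTheory

noncomputable section ContraAux

universe u

noncomputable section ContraAux

variable (R : Type) [CommRing R] (r : R)

/-- The map `e_n ↦ e_n - r e_{n+1}` on the free module `ℕ →₀ R`. -/
def contraD : (ℕ →₀ R) →ₗ[R] (ℕ →₀ R) :=
  LinearMap.id - r • Finsupp.lmapDomain R R Nat.succ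

lemma contraD_apply (x : ℕ →₀ R) :
    contraD R r x = x - r • Finsupp.mapDomain Nat.succ x := rfl

lemma contraD_single (n : ℕ) (a : R) :
    contraD R r (Finsupp.single n a)
      = Finsupp.single n a - Finsupp.single (n + 1) (r * a) := by
  rw [contraD_apply, Finsupp.mapDomain_single, Finsupp.smul_single, smul_eq_mul,
    Nat.succ_eq_add_one]

/-- The evaluation map `e_n ↦ 1/rⁿ` to the localization. -/
def contraE : (ℕ →₀ R) →ₗ[R] Localization.Away r :=
  Finsupp.linearCombination R
    (fun n => IsLocalization.Away.invSelf (S := Localization.Away r) r ^ n)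

lemma contraE_single (n : ℕ) (a : R) :
    contraE R r (Finsupp.single n a)
      = a • IsLocalization.Away.invSelf (S := Localization.Away r) r ^ n :=
  Finsupp.linearCombination_single _ _ _

lemma contraE_comp_D : ∀ x, contraE R r (contraD R r x) = 0 := by
  have : (contraE R r).comp (contraD R r) = 0 := by
    apply Finsupp.lhom_ext
    intro n a
    simp only [LinearMap.comp_apply, LinearMap.zero_apply, contraD_single, map_sub,
      contraE_single]
    have hkey : r • (IsLocalization.Away.invSelf (S := Localization.Away r) r ^ (n+1))
        = IsLocalization.Away.invSelf (S := Localization.Away r) r ^ n := by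
      rw [Algebra.smul_def, pow_succ', ← mul_assoc, IsLocalization.Away.mul_invSelf, one_mul]
    rw [sub_eq_zero, mul_comm r a, mul_smul, hkey]
  intro x
  exact LinearMap.congr_fun this x

lemma contraE_surjective : Function.Surjective (contraE R r) := by
  intro x
  obtain ⟨⟨a, s⟩, h⟩ := IsLocalization.surj (Submonoid.powers r) x
  obtain ⟨n, hn⟩ := s.2
  refine ⟨Finsupp.single n a, ?_⟩
  have hu : IsUnit ((algebraMap R (Localization.Away r)) r) :=
    IsUnit.of_mul_eq_one _ (IsLocalization.Away.mul_invSelf r)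
  apply (hu.pow n).mul_left_cancel
  have h1 : contraE R r (Finsupp.single n a) * (algebraMap R (Localization.Away r)) r ^ n
      = algebraMap R (Localization.Away r) a := by
    rw [contraE_single, Algebra.smul_def, mul_assoc, ← mul_pow,
      mul_comm (IsLocalization.Away.invSelf r), IsLocalization.Away.mul_invSelf, one_pow,
      mul_one]
  rw [mul_comm, mul_comm _ x, h1]
  rw [← h, ← show r ^ n = (s : R) from hn, map_pow]

lemma contraD_injective : Function.Injective (contraD R r) := by
  rw [injective_iff_map_eq_zero]
  intro x hx
  rw [contraD_apply, sub_eq_zero] at hx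
  have key : ∀ m, x m = 0 := by
    intro m
    induction m with
    | zero =>
      have h0 : (Finsupp.mapDomain Nat.succ x) 0 = 0 :=
        Finsupp.mapDomain_notin_range x 0 (by simp [Set.range])
      have := DFunLike.congr_fun hx 0
      rw [Finsupp.smul_apply, h0, smul_zero] at this
      exact this
    | succ m ih =>
      have h2 : (Finsupp.mapDomain Nat.succ x) (m + 1) = x m :=
        Finsupp.mapDomain_apply Nat.succ_injective x m
      have := DFunLike.congr_fun hx (m + 1)
      rw [Finsupp.smul_apply, h2, ih, smul_zero] at this
      exact this
  ext m
  exact key m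

lemma contra_mem_range_step (n k : ℕ) (a : R) :
    Finsupp.single n a - Finsupp.single (n + k) (r ^ k * a)
      ∈ LinearMap.range (contraD R r) := by
  induction k with
  | zero => simp
  | succ k ih =>
    have h2 : Finsupp.single (n + k) (r ^ k * a) - Finsupp.single (n + k + 1) (r * (r ^ k * a))
        ∈ LinearMap.range (contraD R r) := ⟨Finsupp.single (n + k) (r ^ k * a),
          contraD_single R r _ _⟩
    have := add_mem ih h2
    have he : n + (k + 1) = n + k + 1 := by omega
    have ha : r ^ (k + 1) * a = r * (r ^ k * a) := by ring
    rw [he, ha]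
    simpa using this

lemma contra_reduce (N : ℕ) : ∀ (x : ℕ →₀ R), (∀ m ∈ x.support, m ≤ N) →
    ∃ c : R, x - Finsupp.single N c ∈ LinearMap.range (contraD R r) := by
  intro x
  induction x using Finsupp.induction with
  | zero => exact fun _ => ⟨0, by simp⟩
  | single_add a b f haf hb ih =>
    intro hsup
    have hmem : ∀ m, m ∈ f.support ∨ m = a → (Finsupp.single a b + f) m ≠ 0 := by
      intro m hm
      rcases hm with hm | rfl
      · have hma : m ≠ a := fun h => haf (h ▸ hm)
        rw [Finsupp.add_apply, Finsupp.single_apply, if_neg (fun h => hma h.symm), zero_add]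
        exact Finsupp.mem_support_iff.mp hm
      · rw [Finsupp.add_apply, Finsupp.single_apply, if_pos rfl,
          Finsupp.notMem_support_iff.mp haf, add_zero]
        exact hb
    obtain ⟨c, hc⟩ := ih (fun m hm => hsup m (Finsupp.mem_support_iff.mpr (hmem m (Or.inl hm))))
    have haN : a ≤ N := hsup a (Finsupp.mem_support_iff.mpr (hmem a (Or.inr rfl)))
    obtain ⟨k, hk⟩ : ∃ k, a + k = N := ⟨N - a, by omega⟩
    refine ⟨r ^ k * b + c, ?_⟩
    have h1 := contra_mem_range_step R r a k b
    rw [hk] at h1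
    have := add_mem h1 hc
    have heq : Finsupp.single a b + f - Finsupp.single N (r ^ k * b + c)
        = (Finsupp.single a b - Finsupp.single N (r ^ k * b)) + (f - Finsupp.single N c) := by
      rw [Finsupp.single_add]
      abel
    rw [heq]
    exact this

lemma contra_exact (x : ℕ →₀ R) (hx : contraE R r x = 0) :
    x ∈ LinearMap.range (contraD R r) := by
  set N := x.support.sup id with hN
  obtain ⟨c, hc⟩ := contra_reduce R r N x (fun m hm => Finset.le_sup (f := id) hm)
  have hEc : contraE R r (Finsupp.single N c) = 0 := by
    obtain ⟨y, hy⟩ := hc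
    have := contraE_comp_D R r y
    rw [hy, map_sub, hx, zero_sub, neg_eq_zero] at this
    exact this
  have hc0 : (algebraMap R (Localization.Away r)) c = 0 := by
    have h1 : contraE R r (Finsupp.single N c) * (algebraMap R (Localization.Away r)) r ^ N
        = algebraMap R (Localization.Away r) c := by
      rw [contraE_single, Algebra.smul_def, mul_assoc, ← mul_pow,
        mul_comm (IsLocalization.Away.invSelf r), IsLocalization.Away.mul_invSelf, one_pow,
        mul_one]
    rw [← h1, hEc, zero_mul]
  obtain ⟨m, hm⟩ := (IsLocalization.map_eq_zero_iff (Submonoid.powers r)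
    (Localization.Away r) c).mp hc0
  obtain ⟨k, hk⟩ := m.2
  have hrc : r ^ k * c = 0 := by rw [show r ^ k = (m : R) from hk]; exact hm
  have hsingle : Finsupp.single N c ∈ LinearMap.range (contraD R r) := by
    have := contra_mem_range_step R r N k c
    rwa [hrc, Finsupp.single_zero, sub_zero] at this
  have := add_mem hc hsingle
  simpa using this



section Surj

variable (C : Type) [AddCommGroup C] [Module R C]
variable (hsep : ∀ x : C, (∀ n : ℕ, x ∈ (Ideal.span {r ^ n} • ⊤ : Submodule R C)) → x = 0)
variable (hcomp : ∀ c : ℕ → C,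
      (∀ n : ℕ, c (n + 1) - c n ∈ (Ideal.span {r ^ n} • ⊤ : Submodule R C)) →
      ∃ x : C, ∀ n : ℕ, x - c n ∈ (Ideal.span {r ^ n} • ⊤ : Submodule R C))

include hsep hcomp in
lemma contra_hom_surj (g : (ℕ →₀ R) →ₗ[R] C) :
    ∃ f : (ℕ →₀ R) →ₗ[R] C, f.comp (contraD R r) = g := by
  set s : ℕ → ℕ → C :=
    fun n m => ∑ k ∈ Finset.range m, r ^ k • g (Finsupp.single (n + k) 1) with hs
  have hcauchy : ∀ n m, s n (m + 1) - s n m ∈ (Ideal.span {r ^ m} • ⊤ : Submodule R C) := by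
    intro n m
    have : s n (m + 1) - s n m = r ^ m • g (Finsupp.single (n + m) 1) := by
      rw [hs]; simp [Finset.sum_range_succ]
    rw [this]
    exact Submodule.smul_mem_smul (Ideal.mem_span_singleton_self _) Submodule.mem_top
  choose x hx using fun n => hcomp (s n) (hcauchy n)
  have key : ∀ n, x n - r • x (n + 1) = g (Finsupp.single n 1) := by
    intro n
    have hzero : x n - r • x (n + 1) - g (Finsupp.single n 1) = 0 := by
      apply hsep
      intro m
      have hkey : s n (m + 1) = g (Finsupp.single n 1) + r • s (n + 1) m := by
        show (∑ k ∈ Finset.range (m+1), r ^ k • g (Finsupp.single (n + k) 1))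
          = g (Finsupp.single n 1) + r • ∑ k ∈ Finset.range m, r ^ k • g (Finsupp.single (n+1+k) 1)
        rw [Finset.sum_range_succ']
        simp only [pow_zero, one_smul, add_zero]
        rw [add_comm, Finset.smul_sum]
        congr 1
        apply Finset.sum_congr rfl
        intro k _
        rw [show n + (k + 1) = n + 1 + k by omega, pow_succ', mul_smul]
      have hexpand : x n - r • x (n + 1) - g (Finsupp.single n 1)
          = (x n - s n (m + 1)) - r • (x (n + 1) - s (n + 1) m) := by
        rw [smul_sub, hkey]; abel
      rw [hexpand]
      have h1 : x n - s n (m + 1) ∈ (Ideal.span {r ^ m} • ⊤ : Submodule R C) := by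
        apply Submodule.smul_mono_left _ (hx n (m + 1))
        rw [Ideal.span_singleton_le_span_singleton]
        exact pow_dvd_pow r (Nat.le_succ m)
      have h2 : r • (x (n + 1) - s (n + 1) m) ∈ (Ideal.span {r ^ m} • ⊤ : Submodule R C) :=
        Submodule.smul_mem _ r (hx (n + 1) m)
      exact sub_mem h1 h2
    exact sub_eq_zero.mp hzero
  refine ⟨Finsupp.linearCombination R x, ?_⟩
  apply Finsupp.lhom_ext
  intro n a
  have h1 : (Finsupp.single n a : ℕ →₀ R) = a • Finsupp.single n 1 := by
    rw [Finsupp.smul_single, smul_eq_mul, mul_one]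
  rw [h1, map_smul, map_smul, LinearMap.comp_apply, contraD_single, map_sub,
    Finsupp.linearCombination_single, Finsupp.linearCombination_single, one_smul, mul_one]
  rw [key n]


end Surj


section Cat

/-- The objects of the resolution complex. -/
def contraX : ℕ → ModuleCat R
  | 0 => ModuleCat.of R (ℕ →₀ R)
  | 1 => ModuleCat.of R (ℕ →₀ R)
  | _ + 2 => ModuleCat.of R PUnit

/-- The differentials. -/
def contraDfun : ∀ n : ℕ, contraX R (n + 1) ⟶ contraX R n
  | 0 => ModuleCat.ofHom (contraD R r)
  | _ + 1 => 0

/-- The resolution complex `... → 0 → (ℕ→₀R) → (ℕ→₀R)`. -/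
def contraK : ChainComplex (ModuleCat R) ℕ :=
  ChainComplex.of (contraX R) (contraDfun R r) (fun n => by
    show contraDfun R r (n + 1) ≫ contraDfun R r n = 0
    show (0 : contraX R (n+2) ⟶ contraX R (n+1)) ≫ contraDfun R r n = 0
    exact Limits.zero_comp)

lemma contraK_d10 : (contraK R r).d 1 0 = ModuleCat.ofHom (contraD R r) :=
  (ChainComplex.of_d (contraX R) (contraDfun R r) 0)

lemma contraK_d21 : (contraK R r).d 2 1 = 0 :=
  (ChainComplex.of_d (contraX R) (contraDfun R r) 1)

lemma isZero_contraX (n : ℕ) : Limits.IsZero (contraX R (n + 2)) :=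
  ModuleCat.isZero_of_subsingleton (ModuleCat.of R PUnit)

lemma contraKd_eps : (contraK R r).d 1 0 ≫ ModuleCat.ofHom (contraE R r) = 0 := by
  rw [contraK_d10]
  apply ModuleCat.hom_ext
  apply LinearMap.ext
  intro x
  exact contraE_comp_D R r x

/-- The augmentation map to the single complex. -/
def contraPi : contraK R r ⟶ (ChainComplex.single₀ (ModuleCat R)).obj
    (ModuleCat.of R (Localization.Away r)) :=
  (ChainComplex.toSingle₀Equiv (contraK R r) _).symm
    ⟨ModuleCat.ofHom (contraE R r), contraKd_eps R r⟩

lemma contraPi_f0 : (contraPi R r).f 0 = ModuleCat.ofHom (contraE R r) :=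
  ChainComplex.toSingle₀Equiv_symm_apply_f_zero _ _

lemma contraK_exactAt (n : ℕ) : (contraK R r).ExactAt (n + 1) := by
  rw [HomologicalComplex.exactAt_iff' _ (n + 2) (n + 1) n (by simp) (by simp)]
  match n with
  | 0 =>
    apply (ShortComplex.exact_iff_mono _ ?_).mpr
    · show Mono ((contraK R r).d 1 0)
      rw [contraK_d10]
      exact (ModuleCat.mono_iff_injective (ModuleCat.ofHom (contraD R r))).mpr (contraD_injective R r)
    · exact (isZero_contraX R 0).eq_of_src _ _
  | m + 1 =>
    exact ShortComplex.exact_of_isZero_X₂ _ (isZero_contraX R (m + 1))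

instance : QuasiIso (contraPi R r) := by
  constructor
  intro i
  match i with
  | 0 =>
    rw [ChainComplex.quasiIsoAt₀_iff, ShortComplex.quasiIso_iff_of_zeros']
    rotate_left
    · exact (contraK R r).shape 0 0 (by simp)
    · simp; rfl
    · simp; rfl
    constructor
    · rw [ShortComplex.moduleCat_exact_iff]
      intro x hx
      dsimp only [HomologicalComplex.shortComplexFunctor'] at x hx ⊢
      rw [contraPi_f0 R r] at hx
      obtain ⟨y, hy⟩ := contra_exact R r x hx
      refine ⟨y, ?_⟩
      rw [contraK_d10]
      exact hy
    · show Epi ((contraPi R r).f 0)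
      rw [contraPi_f0]
      exact (ModuleCat.epi_iff_surjective (ModuleCat.ofHom (contraE R r))).mpr (contraE_surjective R r)
  | n + 1 =>
    rw [quasiIsoAt_iff_exactAt' (contraPi R r) (n + 1)
      (ChainComplex.exactAt_succ_single_obj _ _)]
    exact contraK_exactAt R r n

/-- The projective resolution of `R[1/r]`. -/
def contraRes : ProjectiveResolution (ModuleCat.of R (Localization.Away r)) where
  complex := contraK R r
  projective n := by
    match n with
    | 0 => exact ModuleCat.projective_of_free (ι := ℕ) Finsupp.basisSingleOne
    | 1 => exact ModuleCat.projective_of_free (ι := ℕ) Finsupp.basisSingleOne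
    | m + 2 =>
      constructor
      intro E X f e he
      exact ⟨0, (isZero_contraX R m).eq_of_src _ _⟩
  π := contraPi R r

end Cat

end ContraAux

/-- Let `R` be a commutative ring and `r ∈ R`.  If `C` is an `R`-module
which is `r`-separated (`⋂_n rⁿC = 0`) and `r`-complete (the natural map `C → lim_n C/rⁿC`
is surjective), then `C` is an `r`-contramodule:
`Hom_R(R[r⁻¹], C) = 0` and `Ext¹_R(R[r⁻¹], C) = 0`. -/
theorem separated_complete_is_contramodule
    (R : Type) [CommRing R] (r : R)
    (C : Type) [AddCommGroup C] [Module R C]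
    (hsep : ∀ x : C, (∀ n : ℕ, x ∈ (Ideal.span {r ^ n} • ⊤ : Submodule R C)) → x = 0)
    (hcomp : ∀ c : ℕ → C,
      (∀ n : ℕ, c (n + 1) - c n ∈ (Ideal.span {r ^ n} • ⊤ : Submodule R C)) →
      ∃ x : C, ∀ n : ℕ, x - c n ∈ (Ideal.span {r ^ n} • ⊤ : Submodule R C)) :
    Subsingleton (Localization.Away r →ₗ[R] C) ∧
    Subsingleton (((Ext R (ModuleCat R) 1).obj
      (Opposite.op (ModuleCat.of R (Localization.Away r)))).obj (ModuleCat.of R C)) := by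
  constructor
  · -- Hom vanishing
    have hzero : ∀ φ : Localization.Away r →ₗ[R] C, φ = 0 := by
      intro φ
      ext s
      rw [LinearMap.zero_apply]
      apply hsep
      intro n
      have hs : s = (r ^ n) •
          (IsLocalization.Away.invSelf (S := Localization.Away r) r ^ n * s) := by
        rw [Algebra.smul_def, map_pow, ← mul_assoc, ← mul_pow,
          IsLocalization.Away.mul_invSelf, one_pow, one_mul]
      rw [hs, map_smul]
      exact Submodule.smul_mem_smul (Ideal.mem_span_singleton_self _) Submodule.mem_top
    exact ⟨fun a b => by rw [hzero a, hzero b]⟩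
  · -- Ext vanishing
    haveI hsub : Subsingleton ((contraK R r).X 2 ⟶ ModuleCat.of R C) :=
      ⟨fun f g => (isZero_contraX R 0).eq_of_src f g⟩
    have hzero : Limits.IsZero (((Ext R (ModuleCat R) 1).obj
        (Opposite.op (ModuleCat.of R (Localization.Away r)))).obj (ModuleCat.of R C)) := by
      refine Limits.IsZero.of_iso ?_ ((contraRes R r).isoExt 1 (ModuleCat.of R C))
      show Limits.IsZero (((contraK R r).linearYonedaObj R (ModuleCat.of R C)).homology 1)
      rw [← HomologicalComplex.exactAt_iff_isZero_homology]
      rw [HomologicalComplex.exactAt_iff' _ 0 1 2 (by simp) (by simp)]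
      refine (ShortComplex.exact_iff_epi _ ?_).mpr ?_
      · apply Limits.IsZero.eq_of_tgt
        show Limits.IsZero (((contraK R r).linearYonedaObj R (ModuleCat.of R C)).X 2)
        exact @ModuleCat.isZero_of_subsingleton R _
          (ModuleCat.of R ((contraK R r).X 2 ⟶ ModuleCat.of R C)) hsub
      · show Epi (((contraK R r).linearYonedaObj R (ModuleCat.of R C)).d 0 1)
        rw [ModuleCat.epi_iff_surjective]
        intro g
        obtain ⟨f, hf⟩ := contra_hom_surj R r C hsep hcomp g.hom
        refine ⟨ModuleCat.ofHom f, ?_⟩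
        simp only [ChainComplex.linearYonedaObj_d, ModuleCat.ofHom, Linear.leftComp_apply]
        show (contraK R r).d 1 0 ≫ ModuleCat.ofHom f = g
        rw [contraK_d10]
        exact ModuleCat.hom_ext hf
    refine ⟨fun a b => ?_⟩
    have key : ∀ z : (((Ext R (ModuleCat R) 1).obj
        (Opposite.op (ModuleCat.of R (Localization.Away r)))).obj (ModuleCat.of R C)), z = 0 := by
      intro z
      have h1 : (𝟙 (((Ext R (ModuleCat R) 1).obj
          (Opposite.op (ModuleCat.of R (Localization.Away r)))).obj (ModuleCat.of R C)))
          = 0 := hzero.eq_of_src _ _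
      calc z = _ := (ModuleCat.id_apply _ z).symm
        _ = _ := by rw [h1]; rfl
        _ = 0 := rfl
    rw [key a, key b]
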